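/- The L.P.R. procedure does not satisfy the Condorcet winner criterion: there exists a preference profile (for example, for 3 alternatives a, b, c and 7 voters, with 2 voters having list (a, b, c), 2 voters (a, c, b), 2 voters (b, c, a) and 1 voter (c, b, a)) in which alternative a is the Condorcet winner but a is not an L.P.R. winner. -/

import Mathlib

open Finset

attribute [local instance] Classical.propDecidable

noncomputable section

/-- A preference profile for `n` voters: each voter has a ballot, a list of
alternatives ordered from most preferred (head) to least preferred (last). -/
abbrev Profile (n : ℕ) (A : Type*) := Fin n → List A

variable {A : Type*} [DecidableEq A]

/-- A valid profile: every ballot is a strict linear order on the alternatives,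
i.e. a duplicate-free list containing every alternative. -/
def IsProfile {n : ℕ} (P : Profile n A) : Prop :=
  ∀ i, (P i).Nodup ∧ ∀ a : A, a ∈ P i

/-- The voter with ballot `l` prefers `x` to `y`. -/
def Prefers (l : List A) (x y : A) : Prop := l.idxOf x < l.idxOf y

/-- The number of voters who rank `a` last (at the bottom of their list). -/
def lastCount {n : ℕ} (P : Profile n A) (a : A) : ℕ :=
  (univ.filter fun i => (P i).getLast? = some a).card

/-- The number of voters who rank `a` first (at the top of their list). -/
def firstCount {n : ℕ} (P : Profile n A) (a : A) : ℕ :=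
  (univ.filter fun i => (P i).head? = some a).card

/-- The number of voters preferring `x` to `y`. -/
def prefCount {n : ℕ} (P : Profile n A) (x y : A) : ℕ :=
  (univ.filter fun i => Prefers (P i) x y).card

/-- `x` defeats `y` in a pairwise majority contest: strictly more voters
prefer `x` to `y` than prefer `y` to `x`. -/
def Defeats {n : ℕ} (P : Profile n A) (x y : A) : Prop :=
  prefCount P y x < prefCount P x y

/-- Condorcet's method: the winners are the alternatives defeated by no other alternative. -/
def CondorcetWinners {n : ℕ} (P : Profile n A) : Set A :=
  {a | ∀ b, ¬ Defeats P b a}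

/-- `a` is a Condorcet winner: it is the unique winner of Condorcet's method. -/
def IsCondorcetWinner {n : ℕ} (P : Profile n A) (a : A) : Prop :=
  CondorcetWinners P = {a}

/-- The bottom alternative of ballot `l` among the still-remaining alternatives `S`. -/
def bottomAmong (S : Finset A) (l : List A) : Option A :=
  (l.filter fun x => decide (x ∈ S)).getLast?

/-- The number of voters ranking `a` last among the remaining alternatives `S`. -/
def hLastCount {n : ℕ} (P : Profile n A) (S : Finset A) (a : A) : ℕ :=
  (univ.filter fun i => bottomAmong S (P i) = some a).card

/-- One round of the L.P.R. procedure: delete from `S` the alternative(s)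
currently appearing at the bottom of the largest number of lists,
i.e. keep those that are not maximal. -/
def lprStep {n : ℕ} (P : Profile n A) (S : Finset A) : Finset A :=
  S.filter fun a => ∃ b ∈ S, hLastCount P S a < hLastCount P S b

/-- Iterating the L.P.R. rounds; once a round would delete every remaining
alternative, the process stops (those alternatives are the ones deleted last). -/
def lprIter {n : ℕ} [Fintype A] (P : Profile n A) : ℕ → Finset A
  | 0 => Finset.univ
  | k + 1 =>
      let S := lprIter P k
      if lprStep P S = ∅ then S else lprStep P S

/-- L.P.R. winners: the alternative(s) deleted in the final round. -/
def LPRWinners {n : ℕ} [Fintype A] (P : Profile n A) : Finset A :=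
  lprIter P (Fintype.card A)

attribute [-instance] Classical.propDecidable

/-- The counterexample profile. -/
def myP : Profile 7 (Fin 3) :=
  ![[0,1,2],[0,1,2],[0,2,1],[0,2,1],[1,2,0],[1,2,0],[2,1,0]]

lemma pf : prefCount myP = fun x y => ![![0,4,4],![3,0,4],![3,3,0]] x y := by
  funext x y
  fin_cases x <;> fin_cases y <;>
    simp +decide [prefCount, Prefers, Finset.card_filter, Fin.sum_univ_seven, myP] <;>
    erw [Finset.filter_congr_decidable] <;> decide

lemma hfun1 : hLastCount myP Finset.univ = ![3,2,2] := by
  funext a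
  fin_cases a <;>
    simp +decide [hLastCount, bottomAmong, Finset.card_filter, Fin.sum_univ_seven, myP]

lemma hfun2 : hLastCount myP {1,2} = ![0,3,4] := by
  funext a
  fin_cases a <;>
    simp +decide [hLastCount, bottomAmong, Finset.card_filter, Fin.sum_univ_seven, myP]

lemma hfun3 : hLastCount myP {1} = ![0,7,0] := by
  funext a
  fin_cases a <;>
    simp +decide [hLastCount, bottomAmong, Finset.card_filter, Fin.sum_univ_seven, myP]

lemma step1 : lprStep myP Finset.univ = {1,2} := by
  ext a
  simp only [lprStep, Finset.mem_filter, hfun1]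
  revert a; decide

lemma step2 : lprStep myP {1,2} = {1} := by
  ext a
  simp only [lprStep, Finset.mem_filter, hfun2]
  revert a; decide

lemma step3 : lprStep myP {1} = ∅ := by
  ext a
  simp only [lprStep, Finset.mem_filter, hfun3]
  revert a; decide

lemma iter3 : lprIter myP 3 = {1} := by
  have e1 : lprIter myP 1 = if lprStep myP Finset.univ = ∅ then Finset.univ
      else lprStep myP Finset.univ := rfl
  have i1 : lprIter myP 1 = {1,2} := by
    rw [e1, step1, if_neg (by decide)]
  have e2 : lprIter myP 2 = if lprStep myP (lprIter myP 1) = ∅ then lprIter myP 1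
      else lprStep myP (lprIter myP 1) := rfl
  have i2 : lprIter myP 2 = {1} := by
    rw [e2, i1, step2, if_neg (by decide)]
  have e3 : lprIter myP 3 = if lprStep myP (lprIter myP 2) = ∅ then lprIter myP 2
      else lprStep myP (lprIter myP 2) := rfl
  rw [e3, i2, step3, if_pos rfl]

/-- the L.P.R. procedure does not satisfy the Condorcet winner
criterion: there is a profile (3 alternatives, 7 voters) with a Condorcet winner
that is not an L.P.R. winner. -/
theorem lpr_not_CWC :
    ∃ P : Profile 7 (Fin 3), IsProfile P ∧
      ∃ a : Fin 3, IsCondorcetWinner P a ∧ a ∉ LPRWinners P := by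
  refine ⟨myP, ?_, 0, ?_, ?_⟩
  · unfold IsProfile
    decide
  · unfold IsCondorcetWinner CondorcetWinners
    ext x
    simp only [Set.mem_setOf_eq, Set.mem_singleton_iff, Defeats, pf]
    revert x
    decide
  · rw [LPRWinners, Fintype.card_fin, iter3]
    decide
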